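/- Fix a query index (a1*, a2*, b*). Let (a1^1, a2, b) ≠ (a1^2, a2, b) with b ≠ b* and a1^1 ≠ a1^2 index two columns of S^m, and let s1, s2 be the corresponding columns of the collapsed matrix S^m_q obtained by deleting all rows in R* = {(u1, u2) : u1 (P b*) + u2 = a2*}. Then ‖s1‖₂² = ‖s2‖₂² = (2^m − 1)/2^m and |⟨s1, s2⟩| = 2^{-m}, so that |⟨s1, s2⟩| / (‖s1‖₂ ‖s2‖₂) = 1/(2^m − 1). -/

import Mathlib

/-- Binary vectors of length `m`. -/
abbrev BV (m : ℕ) := Fin m → ZMod 2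

/-- Row indices of the sparse Kerdock matrix: pairs `(u1, u2)`. -/
abbrev KRow (m : ℕ) := BV m × BV m

/-- Column indices of the sparse Kerdock matrix: triples `(a1, a2, b)`. -/
abbrev KCol (m : ℕ) := BV m × BV m × BV m

/-- `P` is a Kerdock set: a family of symmetric binary matrices such that the sum of
any two distinct members is invertible. -/
def IsKerdockSet {m : ℕ} (P : BV m → Matrix (Fin m) (Fin m) (ZMod 2)) : Prop :=
  (∀ b, (P b).IsSymm) ∧ ∀ b b', b ≠ b' → IsUnit (P b + P b')

/-- Entry of the sparse Kerdock matrix `S^m` at row `(u1, u2)` and column `(a1, a2, b)`: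
`2^{-m/2} * (-1)^{⟨u1, a1⟩}` if `u1 (P b) + u2 = a2`, and `0` otherwise. -/
noncomputable def kerdockEntry (m : ℕ) (P : BV m → Matrix (Fin m) (Fin m) (ZMod 2))
    (u : KRow m) (c : KCol m) : ℝ :=
  if Matrix.vecMul u.1 (P c.2.2) + u.2 = c.2.1 then
    (Real.sqrt (2 ^ m))⁻¹ * (-1 : ℝ) ^ ((∑ i, u.1 i * c.1 i).val)
  else 0

lemma neg_one_pow_val_add (x y : ZMod 2) :
    ((-1:ℝ))^((x+y).val) = (-1)^x.val * (-1)^y.val := by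
  rw [← pow_add, neg_one_pow_eq_pow_mod_two (R := ℝ),
    neg_one_pow_eq_pow_mod_two (R := ℝ) (n := x.val + y.val)]
  congr 1
  revert x y; decide

lemma char_sum {m : ℕ} (d : Fin m → ZMod 2) (hd : d ≠ 0) :
    ∑ u : Fin m → ZMod 2, (-1:ℝ)^((∑ i, u i * d i).val) = 0 := by
  obtain ⟨i0, hi0⟩ : ∃ i, d i ≠ 0 := by
    by_contra h; push_neg at h; exact hd (funext h)
  have hd1 : d i0 = 1 := (by decide : ∀ x : ZMod 2, x ≠ 0 → x = 1) _ hi0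
  refine Finset.sum_involution (fun u _ => Function.update u i0 (u i0 + 1)) ?_ ?_ ?_ ?_
  · intro u _
    have hsum : ∑ i, Function.update u i0 (u i0 + 1) i * d i
        = (∑ i, u i * d i) + 1 := by
      rw [← Finset.add_sum_erase _ _ (Finset.mem_univ i0),
          ← Finset.add_sum_erase _ (fun i => u i * d i) (Finset.mem_univ i0)]
      rw [Finset.sum_congr rfl (fun i hi => by
        rw [Function.update_of_ne (Finset.ne_of_mem_erase hi)])]
      simp [hd1]
      ring
    simp only [hsum, neg_one_pow_val_add]
    norm_num [show ((1:ZMod 2)).val = 1 from rfl]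
  · intro u _ _ h
    have := congrFun h i0
    simp at this
  · intro u _; exact Finset.mem_univ _
  · intro u _
    funext i
    by_cases hi : i = i0
    · subst hi
      rw [Function.update_self, Function.update_self, add_assoc]
      simp [show (1+1:ZMod 2)=0 from rfl]
    · rw [Function.update_of_ne hi, Function.update_of_ne hi]

lemma collapse_sum (m : ℕ) (P : BV m → Matrix (Fin m) (Fin m) (ZMod 2))
    (a2s bs a2 b : BV m) (hQ : IsUnit (P bs + P b)) (a1 a1' : BV m) :
    ∃ u1s : BV m,
      ∑ u ∈ Finset.univ.filter (fun u : KRow m => Matrix.vecMul u.1 (P bs) + u.2 ≠ a2s),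
        kerdockEntry m P u (a1, a2, b) * kerdockEntry m P u (a1', a2, b)
      = ∑ u1 ∈ Finset.univ.erase u1s,
          ((Real.sqrt ((2:ℝ) ^ m))⁻¹)^2 *
            ((-1:ℝ)^((∑ i, u1 i * a1 i).val) * (-1:ℝ)^((∑ i, u1 i * a1' i).val)) := by
  obtain ⟨V, hV⟩ := hQ
  set R : Matrix (Fin m) (Fin m) (ZMod 2) := ↑V⁻¹ with hRdef
  have hQR : (P bs + P b) * R = 1 := by rw [hRdef, ← hV]; exact V.mul_inv
  have hRQ : R * (P bs + P b) = 1 := by rw [hRdef, ← hV]; exact V.inv_mul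
  set u1s : BV m := Matrix.vecMul (a2s + a2) R with hu1s
  refine ⟨u1s, ?_⟩
  have hiff : ∀ u1 : BV m,
      (Matrix.vecMul u1 (P bs) + (a2 + Matrix.vecMul u1 (P b)) = a2s) ↔ u1 = u1s := by
    intro u1
    have h1 : (Matrix.vecMul u1 (P bs) + (a2 + Matrix.vecMul u1 (P b)) = a2s)
        ↔ Matrix.vecMul u1 (P bs + P b) = a2s + a2 := by
      rw [Matrix.vecMul_add]
      constructor
      · intro h; funext i
        have := congrFun h i
        simp only [Pi.add_apply] at this ⊢
        exact (by decide : ∀ x y z w : ZMod 2, x + (z + y) = w → x + y = w + z)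
          _ _ _ _ this
      · intro h; funext i
        have := congrFun h i
        simp only [Pi.add_apply] at this ⊢
        exact (by decide : ∀ x y z w : ZMod 2, x + y = w + z → x + (z + y) = w)
          _ _ _ _ this
    rw [h1]
    constructor
    · intro h
      have : Matrix.vecMul (Matrix.vecMul u1 (P bs + P b)) R
          = Matrix.vecMul (a2s + a2) R := by
        rw [h]
      rwa [Matrix.vecMul_vecMul, hQR, Matrix.vecMul_one] at this
    · intro h
      rw [h, hu1s, Matrix.vecMul_vecMul, hRQ, Matrix.vecMul_one]
  rw [Finset.sum_filter, Fintype.sum_prod_type]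
  have inner : ∀ u1 : BV m,
      (∑ u2 : BV m, if Matrix.vecMul u1 (P bs) + u2 ≠ a2s then
          kerdockEntry m P (u1, u2) (a1, a2, b) * kerdockEntry m P (u1, u2) (a1', a2, b)
        else 0)
      = if u1 = u1s then 0 else
          ((Real.sqrt ((2:ℝ) ^ m))⁻¹)^2 *
            ((-1:ℝ)^((∑ i, u1 i * a1 i).val) * (-1:ℝ)^((∑ i, u1 i * a1' i).val)) := by
    intro u1
    rw [Finset.sum_eq_single (a2 + Matrix.vecMul u1 (P b))]
    · have hcond : Matrix.vecMul u1 (P b) + (a2 + Matrix.vecMul u1 (P b)) = a2 := by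
        funext i
        simp only [Pi.add_apply]
        exact (by decide : ∀ x y : ZMod 2, x + (y + x) = y) _ _
      have hE : ∀ a : BV m, kerdockEntry m P (u1, a2 + Matrix.vecMul u1 (P b)) (a, a2, b)
          = (Real.sqrt ((2:ℝ)^m))⁻¹ * (-1:ℝ)^((∑ i, u1 i * a i).val) := by
        intro a
        rw [kerdockEntry]
        simp only []
        rw [if_pos hcond]
      rw [hE, hE]
      by_cases hcase : u1 = u1s
      · rw [if_neg (by simpa [hiff u1] using hcase), if_pos hcase]
      · rw [if_pos (by simpa [hiff u1] using hcase), if_neg hcase]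
        ring
    · intro u2 _ hne
      have hz : kerdockEntry m P (u1, u2) (a1, a2, b) = 0 := by
        rw [kerdockEntry]
        simp only []
        rw [if_neg]
        intro h
        apply hne
        funext i
        have := congrFun h i
        simp only [Pi.add_apply] at this ⊢
        exact (by decide : ∀ x y z : ZMod 2, x + y = z → y = z + x) _ _ _ this
      rw [hz, zero_mul, ite_self]
    · intro h
      exact absurd (Finset.mem_univ _) h
  simp only [inner]
  have hfin := Finset.sum_filter (s := (Finset.univ : Finset (BV m)))
    (fun u1 : BV m => u1 ≠ u1s)
    (fun u1 : BV m => ((Real.sqrt ((2:ℝ) ^ m))⁻¹)^2 *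
      ((-1:ℝ)^((∑ i, u1 i * a1 i).val) * (-1:ℝ)^((∑ i, u1 i * a1' i).val)))
  rw [Finset.filter_ne'] at hfin
  rw [hfin]
  apply Finset.sum_congr rfl
  intro x _
  by_cases h : x = u1s <;> simp [h]

lemma sq_sum_collapsed (m : ℕ) (P : BV m → Matrix (Fin m) (Fin m) (ZMod 2))
    (a2s bs a2 b : BV m) (hQ : IsUnit (P bs + P b)) (a1 : BV m) :
    ∑ u ∈ Finset.univ.filter (fun u : KRow m => Matrix.vecMul u.1 (P bs) + u.2 ≠ a2s),
        (kerdockEntry m P u (a1, a2, b)) ^ 2 = ((2 : ℝ) ^ m - 1) / 2 ^ m := by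
  obtain ⟨u1s, hsum⟩ := collapse_sum m P a2s bs a2 b hQ a1 a1
  have hpow : (∑ u ∈ Finset.univ.filter
        (fun u : KRow m => Matrix.vecMul u.1 (P bs) + u.2 ≠ a2s),
      (kerdockEntry m P u (a1, a2, b)) ^ 2)
      = ∑ u ∈ Finset.univ.filter
          (fun u : KRow m => Matrix.vecMul u.1 (P bs) + u.2 ≠ a2s),
        kerdockEntry m P u (a1, a2, b) * kerdockEntry m P u (a1, a2, b) := by
    apply Finset.sum_congr rfl; intro u _; rw [sq]
  rw [hpow, hsum]
  have hterm : ∀ u1 : BV m,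
      ((Real.sqrt ((2:ℝ) ^ m))⁻¹)^2 *
        ((-1:ℝ)^((∑ i, u1 i * a1 i).val) * (-1:ℝ)^((∑ i, u1 i * a1 i).val))
      = ((2:ℝ)^m)⁻¹ := by
    intro u1
    rw [← pow_add, Even.neg_one_pow ⟨_, rfl⟩, mul_one, inv_pow,
      Real.sq_sqrt (by positivity)]
  rw [Finset.sum_congr rfl (fun u1 _ => hterm u1), Finset.sum_const,
    Finset.card_erase_of_mem (Finset.mem_univ _), nsmul_eq_mul, Finset.card_univ]
  have hcard : Fintype.card (BV m) = 2 ^ m := by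
    rw [Fintype.card_fun]; simp
  rw [hcard, Nat.cast_sub Nat.one_le_two_pow]
  push_cast
  have h2m : (0:ℝ) < 2 ^ m := by positivity
  field_simp

lemma cross_sum_collapsed (m : ℕ) (P : BV m → Matrix (Fin m) (Fin m) (ZMod 2))
    (a2s bs a2 b : BV m) (hQ : IsUnit (P bs + P b)) (a11 a12 : BV m) (ha : a11 ≠ a12) :
    |∑ u ∈ Finset.univ.filter (fun u : KRow m => Matrix.vecMul u.1 (P bs) + u.2 ≠ a2s),
        kerdockEntry m P u (a11, a2, b) * kerdockEntry m P u (a12, a2, b)|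
      = ((2 : ℝ) ^ m)⁻¹ := by
  obtain ⟨u1s, hsum⟩ := collapse_sum m P a2s bs a2 b hQ a11 a12
  rw [hsum]
  have hd : (a11 + a12 : BV m) ≠ 0 := by
    intro h
    apply ha
    funext i
    have := congrFun h i
    simp only [Pi.add_apply, Pi.zero_apply] at this
    exact (by decide : ∀ x y : ZMod 2, x + y = 0 → x = y) _ _ this
  have hterm : ∀ u1 : BV m,
      (-1:ℝ)^((∑ i, u1 i * a11 i).val) * (-1:ℝ)^((∑ i, u1 i * a12 i).val)
      = (-1:ℝ)^((∑ i, u1 i * (a11 + a12) i).val) := by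
    intro u1
    rw [show (∑ i, u1 i * (a11 + a12) i)
        = (∑ i, u1 i * a11 i) + (∑ i, u1 i * a12 i) by
      rw [← Finset.sum_add_distrib]
      apply Finset.sum_congr rfl
      intro i _
      simp [Pi.add_apply, mul_add]]
    rw [neg_one_pow_val_add]
  have hstep : (∑ u1 ∈ Finset.univ.erase u1s,
      ((Real.sqrt ((2:ℝ) ^ m))⁻¹)^2 *
        ((-1:ℝ)^((∑ i, u1 i * a11 i).val) * (-1:ℝ)^((∑ i, u1 i * a12 i).val)))
      = ((Real.sqrt ((2:ℝ) ^ m))⁻¹)^2 *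
        ∑ u1 ∈ Finset.univ.erase u1s, (-1:ℝ)^((∑ i, u1 i * (a11 + a12) i).val) := by
    rw [Finset.mul_sum]
    apply Finset.sum_congr rfl
    intro u1 _
    rw [hterm]
  rw [hstep, Finset.sum_erase_eq_sub (Finset.mem_univ u1s), char_sum _ hd,
    zero_sub, abs_mul, abs_neg, abs_pow, abs_pow, abs_neg, abs_one, one_pow,
    mul_one, abs_of_nonneg (by positivity : (0:ℝ) ≤ (Real.sqrt ((2:ℝ)^m))⁻¹),
    inv_pow, Real.sq_sqrt (by positivity)]


/-- For two distinct columns of `S^m` sharing the same `a2` and `b` with `b ≠ b*`, the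
corresponding collapsed columns `s1, s2` satisfy
`‖s1‖² = ‖s2‖² = (2^m − 1)/2^m`, `|⟨s1, s2⟩| = 2^{-m}`, and hence the normalized inner
product equals `1/(2^m − 1)`. -/
theorem sparse_kerdock_collapsed_orthogonal_pair (m : ℕ) (hm : 1 ≤ m)
    (P : BV m → Matrix (Fin m) (Fin m) (ZMod 2)) (hP : IsKerdockSet P)
    (a1s a2s bs : BV m) (a11 a12 a2 b : BV m) (hb : b ≠ bs) (ha : a11 ≠ a12) :
    (∑ u ∈ Finset.univ.filter (fun u : KRow m => Matrix.vecMul u.1 (P bs) + u.2 ≠ a2s),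
        (kerdockEntry m P u (a11, a2, b)) ^ 2 = ((2 : ℝ) ^ m - 1) / 2 ^ m) ∧
    (∑ u ∈ Finset.univ.filter (fun u : KRow m => Matrix.vecMul u.1 (P bs) + u.2 ≠ a2s),
        (kerdockEntry m P u (a12, a2, b)) ^ 2 = ((2 : ℝ) ^ m - 1) / 2 ^ m) ∧
    |∑ u ∈ Finset.univ.filter (fun u : KRow m => Matrix.vecMul u.1 (P bs) + u.2 ≠ a2s),
        kerdockEntry m P u (a11, a2, b) * kerdockEntry m P u (a12, a2, b)|
      = ((2 : ℝ) ^ m)⁻¹ ∧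
    |∑ u ∈ Finset.univ.filter (fun u : KRow m => Matrix.vecMul u.1 (P bs) + u.2 ≠ a2s),
        kerdockEntry m P u (a11, a2, b) * kerdockEntry m P u (a12, a2, b)| /
      (Real.sqrt (∑ u ∈ Finset.univ.filter
          (fun u : KRow m => Matrix.vecMul u.1 (P bs) + u.2 ≠ a2s),
          (kerdockEntry m P u (a11, a2, b)) ^ 2) *
        Real.sqrt (∑ u ∈ Finset.univ.filter
          (fun u : KRow m => Matrix.vecMul u.1 (P bs) + u.2 ≠ a2s),
          (kerdockEntry m P u (a12, a2, b)) ^ 2))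
      = 1 / ((2 : ℝ) ^ m - 1) := by
  have hQ : IsUnit (P bs + P b) := hP.2 bs b (fun h => hb h.symm)
  have h1 := sq_sum_collapsed m P a2s bs a2 b hQ a11
  have h2 := sq_sum_collapsed m P a2s bs a2 b hQ a12
  have h3 := cross_sum_collapsed m P a2s bs a2 b hQ a11 a12 ha
  refine ⟨h1, h2, h3, ?_⟩
  rw [h1, h2, h3]
  have h1lt : (1:ℝ) < 2 ^ m := by
    calc (1:ℝ) < 2 := by norm_num
    _ = 2 ^ 1 := (pow_one 2).symm
    _ ≤ 2 ^ m := by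
      apply pow_le_pow_right₀ (by norm_num) hm
  have hA : (0:ℝ) ≤ ((2:ℝ) ^ m - 1) / 2 ^ m := by
    apply div_nonneg (by linarith) (by positivity)
  rw [Real.mul_self_sqrt hA]
  rw [div_div_eq_mul_div, inv_mul_cancel₀ (by positivity : ((2:ℝ)^m) ≠ 0)]
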